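/- Every l-repair is a g-repair: if ≺ is an acyclic priority on the conflict graph of a finite database r, then every repair constructed by the iterative algorithm that repeatedly selects a ≺-undominated tuple and deletes it and its neighbors (an l-repair) is ≪-maximal among all repairs (a g-repair). -/
import Mathlib


/-- A relation is acyclic if no element is related to itself by the transitive closure. -/
def Acyclic {α : Type*} (prec : α → α → Prop) : Prop :=
  ∀ x, ¬ Relation.TransGen prec x x

/-- The global preference order on sets of tuples: `X ≪ Y`. -/
def ll {α : Type*} (prec : α → α → Prop) (X Y : Set α) : Prop :=
  ∀ x ∈ X \ Y, ∃ y ∈ Y \ X, prec x y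

/-- Closed neighborhood of `x` in the conflict graph. -/
def nbhd {α : Type*} (conflict : α → α → Prop) (x : α) : Set α :=
  {x} ∪ {y | conflict x y}

/-- The winnow operator: elements of `s` not dominated by any element of `s`. -/
def winnow {α : Type*} (prec : α → α → Prop) (s : Set α) : Set α :=
  {t ∈ s | ¬ ∃ t' ∈ s, prec t t'}

/-- A repair: a maximal subset of `r` containing no conflicting pair. -/
def IsRepair {α : Type*} (r : Set α) (conflict : α → α → Prop) (X : Set α) : Prop :=
  X ⊆ r ∧ (∀ a ∈ X, ∀ b ∈ X, ¬ conflict a b) ∧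
    ∀ y ∈ r, y ∉ X → ∃ a ∈ X, conflict y a

/-- A locally preferred repair: obtainable by iteratively choosing an undominated
tuple and removing it together with its conflict neighborhood. -/
def IsLRepair {α : Type*} (r : Set α) (conflict prec : α → α → Prop) (X : Set α) : Prop :=
  ∃ (n : ℕ) (x : Fin n → α), Function.Injective x ∧ X = Set.range x ∧
    (∀ i : Fin n, x i ∈ winnow prec (r \ {y | ∃ j, j < i ∧ y ∈ nbhd conflict (x j)})) ∧
    winnow prec (r \ {y | ∃ i, y ∈ nbhd conflict (x i)}) = ∅

/-- A globally preferred repair: a `≪`-maximal repair. -/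
def IsGRepair {α : Type*} (r : Set α) (conflict prec : α → α → Prop) (X : Set α) : Prop :=
  IsRepair r conflict X ∧ ∀ Y, IsRepair r conflict Y → ll prec X Y → Y = X

/-- every l-repair is a g-repair. -/
lemma winnow_nonempty {α : Type*} (prec : α → α → Prop) (hacyc : Acyclic prec)
    {s : Set α} (hs : s.Finite) (hne : s.Nonempty) : (winnow prec s).Nonempty := by
  haveI : Finite s := hs
  let R : s → s → Prop := fun a b => Relation.TransGen prec b.1 a.1
  haveI : IsTrans s R := ⟨fun a b c h1 h2 => h2.trans h1⟩
  haveI : IsIrrefl s R := ⟨fun a h => hacyc a.1 h⟩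
  have hwf : WellFounded R := Finite.wellFounded_of_trans_of_irrefl R
  obtain ⟨m0⟩ : Nonempty s := hne.to_subtype
  obtain ⟨m, -, hm⟩ := hwf.has_min Set.univ ⟨m0, trivial⟩
  refine ⟨m.1, m.2, ?_⟩
  rintro ⟨t', ht', hp⟩
  exact hm ⟨t', ht'⟩ trivial (Relation.TransGen.single hp)

theorem lrepair_is_grepair {α : Type*} (r : Set α) (hr : r.Finite)
    (conflict prec : α → α → Prop)
    (hsymm : ∀ x y, conflict x y → conflict y x)
    (hirr : ∀ x, ¬ conflict x x)
    (hsub : ∀ x y, prec x y → conflict x y)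
    (hasymm : ∀ x y, prec x y → ¬ prec y x)
    (hacyc : Acyclic prec)
    (X : Set α) (hX : IsLRepair r conflict prec X) :
    IsGRepair r conflict prec X := by
  obtain ⟨n, x, hinj, hXeq, hmem, hfin⟩ := hX
  subst hXeq
  -- no conflicts among the x i
  have hnc : ∀ i j : Fin n, j < i → ¬ conflict (x j) (x i) := by
    intro i j hji hc
    exact (hmem i).1.2 ⟨j, hji, Or.inr hc⟩
  have hconf : ∀ a ∈ Set.range x, ∀ b ∈ Set.range x, ¬ conflict a b := by
    rintro _ ⟨i, rfl⟩ _ ⟨j, rfl⟩ hc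
    rcases lt_trichotomy i j with h | h | h
    · exact hnc j i h hc
    · exact hirr (x i) (h ▸ hc)
    · exact hnc i j h (hsymm _ _ hc)
  have hrep : IsRepair r conflict (Set.range x) := by
    refine ⟨?_, hconf, ?_⟩
    · rintro _ ⟨i, rfl⟩; exact (hmem i).1.1
    · intro y hyr hyX
      by_contra hno
      push_neg at hno
      have hyS : y ∈ r \ {z | ∃ i, z ∈ nbhd conflict (x i)} := by
        refine ⟨hyr, ?_⟩
        rintro ⟨i, hy⟩
        rcases hy with hy | hy
        · exact hyX ⟨i, (Set.mem_singleton_iff.mp hy).symm⟩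
        · exact hno (x i) ⟨i, rfl⟩ (hsymm _ _ hy)
      have := winnow_nonempty prec hacyc (hr.subset (Set.diff_subset)) ⟨y, hyS⟩
      rw [hfin] at this
      exact this.ne_empty rfl
  refine ⟨hrep, ?_⟩
  intro Y hY hll
  have key : ∀ m : ℕ, ∀ i : Fin n, i.val = m → x i ∈ Y := by
    intro m
    induction m using Nat.strong_induction_on with
    | _ m ih =>
      intro i him
      by_contra hxi
      obtain ⟨y, ⟨hyY, hyX⟩, hp⟩ := hll (x i) ⟨⟨i, rfl⟩, hxi⟩
      have hyS : y ∈ r \ {z | ∃ j, j < i ∧ z ∈ nbhd conflict (x j)} := by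
        refine ⟨hY.1 hyY, ?_⟩
        rintro ⟨j, hj, hy⟩
        have hxjY : x j ∈ Y := ih j.val (him ▸ hj) j rfl
        rcases hy with hy | hy
        · exact hyX ⟨j, (Set.mem_singleton_iff.mp hy).symm⟩
        · exact hY.2.1 _ hxjY _ hyY hy
      exact (hmem i).2 ⟨y, hyS, hp⟩
  have hXY : Set.range x ⊆ Y := by rintro _ ⟨i, rfl⟩; exact key i.val i rfl
  apply Set.Subset.antisymm _ hXY
  intro z hzY
  by_contra hzX
  obtain ⟨a, haX, hc⟩ := hrep.2.2 z (hY.1 hzY) hzX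
  exact hY.2.1 _ hzY _ (hXY haX) hc
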